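/- Let Ω̄ be a real symmetric positive definite n×n matrix and Δ₁,…,Δ_N real symmetric positive semidefinite n×n matrices. Then the set function f_det(S) = log det(Ω̄ + ∑_{ℓ∈S} Δ_ℓ) is submodular: for all A ⊆ B ⊆ {1,…,N} and e ∉ B, f_det(A ∪ {e}) − f_det(A) ≥ f_det(B ∪ {e}) − f_det(B). -/

import Mathlib

set_option maxHeartbeats 1000000

open Matrix BigOperators
variable {n : ℕ}

-- det(1+F) ≥ 1 for PSD F
lemma aux_det_one_add_ge {F : Matrix (Fin n) (Fin n) ℝ} (hF : F.PosSemidef) :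
    1 ≤ (1 + F).det := by
  have hspec := hF.1.spectral_theorem
  simp only [Unitary.conjStarAlgAut_apply] at hspec
  set U : Matrix (Fin n) (Fin n) ℝ := (hF.1.eigenvectorUnitary : Matrix (Fin n) (Fin n) ℝ) with hU
  have hUU : U * star U = 1 := (Matrix.mem_unitaryGroup_iff).mp hF.1.eigenvectorUnitary.2
  have h1 : (1 + F) = U * (1 + diagonal (RCLike.ofReal ∘ hF.1.eigenvalues)) * star U := by
    rw [Matrix.mul_add, Matrix.add_mul, Matrix.mul_one, hUU, ← hspec]
  have hdetU : U.det * (star U).det = 1 := by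
    rw [← det_mul, hUU, det_one]
  rw [h1, det_mul, det_mul]
  have : (1 + diagonal (RCLike.ofReal ∘ hF.1.eigenvalues) : Matrix (Fin n) (Fin n) ℝ).det
      = ∏ i, (1 + hF.1.eigenvalues i) := by
    rw [← diagonal_one, diagonal_add, det_diagonal]
    simp
  rw [mul_comm U.det _, mul_assoc, hdetU, mul_one, this]
  calc (1:ℝ) = ∏ _i : Fin n, 1 := by simp
  _ ≤ ∏ i, (1 + hF.1.eigenvalues i) := by
      refine Finset.prod_le_prod (fun i _ => by norm_num) (fun i _ => ?_)
      have := hF.eigenvalues_nonneg i; linarith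

lemma aux_posDef_of_det {S : Matrix (Fin n) (Fin n) ℝ} (hS : S.PosSemidef)
    (hdet : S.det ≠ 0) : S.PosDef := by
  refine PosDef.of_dotProduct_mulVec_pos hS.1 (fun x hx => ?_)
  rcases lt_or_eq_of_le (hS.dotProduct_mulVec_nonneg x) with h | h
  · exact h
  · exfalso
    have h0 : S *ᵥ x = 0 := (hS.dotProduct_mulVec_zero_iff x).mp ?_
    · have : x = 0 := by
        have := congrArg (fun v => S⁻¹ *ᵥ v) h0
        simpa [mulVec_mulVec, nonsing_inv_mul S (isUnit_iff_ne_zero.mpr hdet)] using this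
      exact hx this
    · exact h.symm

open scoped MatrixOrder in
noncomputable def Matrix.PosSemidef.sqrt {M : Matrix (Fin n) (Fin n) ℝ} (_hM : M.PosSemidef) :
    Matrix (Fin n) (Fin n) ℝ := CFC.sqrt M

open scoped MatrixOrder in
lemma Matrix.PosSemidef.posSemidef_sqrt {M : Matrix (Fin n) (Fin n) ℝ} (hM : M.PosSemidef) :
    hM.sqrt.PosSemidef := (CFC.sqrt_nonneg M).posSemidef

open scoped MatrixOrder in
lemma Matrix.PosSemidef.sqrt_mul_self {M : Matrix (Fin n) (Fin n) ℝ} (hM : M.PosSemidef) :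
    hM.sqrt * hM.sqrt = M := CFC.sqrt_mul_sqrt_self M hM.nonneg

lemma aux_sqrt_posDef {M : Matrix (Fin n) (Fin n) ℝ} (hM : M.PosDef) :
    hM.posSemidef.sqrt.PosDef := by
  apply aux_posDef_of_det hM.posSemidef.posSemidef_sqrt
  intro h
  have := hM.posSemidef.sqrt_mul_self
  have hd : M.det = hM.posSemidef.sqrt.det * hM.posSemidef.sqrt.det := by
    rw [← det_mul, this]
  rw [h, mul_zero] at hd
  exact hM.det_pos.ne' hd

-- decomposition: M + X = S * (1 + S⁻¹ X S⁻¹) * S, det version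
lemma aux_det_add {M : Matrix (Fin n) (Fin n) ℝ} (hM : M.PosDef)
    (X : Matrix (Fin n) (Fin n) ℝ) :
    (M + X).det = M.det *
      (1 + hM.posSemidef.sqrt⁻¹ * X * hM.posSemidef.sqrt⁻¹).det := by
  set S := hM.posSemidef.sqrt with hSdef
  have hSd : S.det ≠ 0 := by
    intro h
    have hd : M.det = S.det * S.det := by rw [← det_mul, hM.posSemidef.sqrt_mul_self]
    rw [h, mul_zero] at hd
    exact hM.det_pos.ne' hd
  have hu : IsUnit S.det := isUnit_iff_ne_zero.mpr hSd
  have h1 : S * S⁻¹ = 1 := mul_nonsing_inv S hu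
  have h2 : S⁻¹ * S = 1 := nonsing_inv_mul S hu
  have key : M + X = S * (1 + S⁻¹ * X * S⁻¹) * S := by
    rw [Matrix.mul_add, Matrix.mul_one, Matrix.add_mul]
    rw [hM.posSemidef.sqrt_mul_self]
    congr 1
    symm
    calc S * (S⁻¹ * X * S⁻¹) * S = (S * S⁻¹) * X * (S⁻¹ * S) := by
          simp only [Matrix.mul_assoc]
    _ = X := by rw [h1, h2, Matrix.one_mul, Matrix.mul_one]
  rw [key, det_mul, det_mul]
  have hMd : M.det = S.det * S.det := by rw [← det_mul, hM.posSemidef.sqrt_mul_self]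
  rw [hMd]; ring

-- PSD of S⁻¹ X S⁻¹ for X PSD, S = sqrt of PD
lemma aux_conj_psd {M X : Matrix (Fin n) (Fin n) ℝ} (hM : M.PosDef)
    (hX : X.PosSemidef) :
    (hM.posSemidef.sqrt⁻¹ * X * hM.posSemidef.sqrt⁻¹).PosSemidef := by
  have hH : hM.posSemidef.sqrt⁻¹.IsHermitian :=
    (hM.posSemidef.posSemidef_sqrt.inv).1
  have := hX.conjTranspose_mul_mul_same (hM.posSemidef.sqrt⁻¹)
  rwa [hH.eq] at this

-- monotonicity: PD X, PSD (Y - X) ⇒ det X ≤ det Y  (given as Y = X + P)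
lemma aux_det_mono {X P : Matrix (Fin n) (Fin n) ℝ} (hX : X.PosDef)
    (hP : P.PosSemidef) : X.det ≤ (X + P).det := by
  rw [aux_det_add hX P]
  have h1 : (1:ℝ) ≤ (1 + hX.posSemidef.sqrt⁻¹ * P * hX.posSemidef.sqrt⁻¹).det :=
    aux_det_one_add_ge (aux_conj_psd hX hP)
  nlinarith [hX.det_pos]
-- 1 - P⁻¹ is PSD when P ⪰ 1
lemma aux_one_sub_inv {P : Matrix (Fin n) (Fin n) ℝ} (hP : P.PosDef)
    (hD : (P - 1).PosSemidef) : ((1 : Matrix (Fin n) (Fin n) ℝ) - P⁻¹).PosSemidef := by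
  have hPi : P⁻¹.PosDef := hP.inv
  set Q := hPi.posSemidef.sqrt with hQdef
  have hQQ : Q * Q = P⁻¹ := hPi.posSemidef.sqrt_mul_self
  have hQH : Qᴴ = Q := (hPi.posSemidef.posSemidef_sqrt).1.eq
  have hu : IsUnit P.det := isUnit_iff_ne_zero.mpr hP.det_pos.ne'
  have h1 : P * P⁻¹ = 1 := mul_nonsing_inv P hu
  have h2 : P⁻¹ * P = 1 := nonsing_inv_mul P hu
  have hcomm : P * Q = Q * P := by
    have hc : Q * P⁻¹ = P⁻¹ * Q := by rw [← hQQ, Matrix.mul_assoc]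
    calc P * Q = P * Q * (P⁻¹ * P) := by rw [h2, Matrix.mul_one]
    _ = P * (Q * P⁻¹) * P := by simp only [Matrix.mul_assoc]
    _ = P * (P⁻¹ * Q) * P := by rw [hc]
    _ = (P * P⁻¹) * (Q * P) := by simp only [Matrix.mul_assoc]
    _ = Q * P := by rw [h1, Matrix.one_mul]
  have hQPQ : Q * P * Q = 1 := by
    calc Q * P * Q = (P * Q) * Q := by rw [hcomm]
    _ = P * (Q * Q) := by rw [Matrix.mul_assoc]
    _ = 1 := by rw [hQQ, h1]
  have key : (1 : Matrix (Fin n) (Fin n) ℝ) - P⁻¹ = Q * (P - 1) * Q := by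
    rw [Matrix.mul_sub, Matrix.mul_one, Matrix.sub_mul, hQPQ, hQQ]
  rw [key]
  have hps := hD.conjTranspose_mul_mul_same Q
  rwa [hQH] at hps

open scoped MatrixOrder in
-- key: det (1 + D + E) ≤ det (1 + D) * det (1 + E)
lemma aux_det_key {D E : Matrix (Fin n) (Fin n) ℝ} (hD : D.PosSemidef)
    (hE : E.PosSemidef) :
    (1 + D + E).det ≤ (1 + D).det * (1 + E).det := by
  have hP : (1 + D).PosDef := Matrix.PosDef.one.add_posSemidef hD
  set S := hP.posSemidef.sqrt with hSdef
  set R := S⁻¹ with hRdef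
  have hRH : Rᴴ = R := (hP.posSemidef.posSemidef_sqrt.inv).1.eq
  have hdecomp : (1 + D + E).det = (1 + D).det * (1 + R * E * R).det :=
    aux_det_add hP E
  rw [hdecomp]
  have hRR : R * R = (1 + D)⁻¹ := by
    rw [hRdef, ← Matrix.mul_inv_rev, hP.posSemidef.sqrt_mul_self]
  obtain ⟨Bm, hB⟩ : ∃ Bm : Matrix (Fin n) (Fin n) ℝ, E = Bmᴴ * Bm :=
    CStarAlgebra.nonneg_iff_eq_star_mul_self.mp hE.nonneg
  have step1 : (1 + R * E * R).det = (1 + Bm * (1 + D)⁻¹ * Bmᴴ).det := by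
    have : R * E * R = (Bm * R)ᴴ * (Bm * R) := by
      rw [conjTranspose_mul, hRH, hB]
      simp only [Matrix.mul_assoc]
    rw [this, det_one_add_mul_comm]
    congr 1
    rw [conjTranspose_mul, hRH]
    calc 1 + Bm * R * (R * Bmᴴ) = 1 + Bm * (R * R) * Bmᴴ := by
          simp only [Matrix.mul_assoc]
    _ = 1 + Bm * (1 + D)⁻¹ * Bmᴴ := by rw [hRR]
  rw [step1]
  have hsub : ((1 : Matrix (Fin n) (Fin n) ℝ) - (1 + D)⁻¹).PosSemidef := by
    apply aux_one_sub_inv hP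
    simpa using hD
  have hX : (1 + Bm * (1 + D)⁻¹ * Bmᴴ).PosDef :=
    Matrix.PosDef.one.add_posSemidef (hP.inv.posSemidef.mul_mul_conjTranspose_same Bm)
  have hPP : (Bm * ((1 : Matrix (Fin n) (Fin n) ℝ) - (1 + D)⁻¹) * Bmᴴ).PosSemidef :=
    hsub.mul_mul_conjTranspose_same Bm
  have := aux_det_mono hX hPP
  have heq : 1 + Bm * (1 + D)⁻¹ * Bmᴴ + Bm * ((1 : Matrix (Fin n) (Fin n) ℝ) - (1 + D)⁻¹) * Bmᴴ
      = 1 + Bm * Bmᴴ := by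
    rw [Matrix.mul_sub, Matrix.mul_one, Matrix.sub_mul]
    abel
  rw [heq] at this
  have hfin : (1 + Bm * (1 + D)⁻¹ * Bmᴴ).det ≤ (1 + E).det := by
    calc (1 + Bm * (1 + D)⁻¹ * Bmᴴ).det ≤ (1 + Bm * Bmᴴ).det := this
    _ = (1 + Bmᴴ * Bm).det := det_one_add_mul_comm Bm Bmᴴ
    _ = (1 + E).det := by rw [← hB]
  exact mul_le_mul_of_nonneg_left hfin hP.det_pos.le
-- main matrix inequality
lemma aux_main {M D E : Matrix (Fin n) (Fin n) ℝ} (hM : M.PosDef)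
    (hD : D.PosSemidef) (hE : E.PosSemidef) :
    (M + E + D).det * M.det ≤ (M + D).det * (M + E).det := by
  set T := hM.posSemidef.sqrt⁻¹ with hTdef
  have hD' : (T * D * T).PosSemidef := aux_conj_psd hM hD
  have hE' : (T * E * T).PosSemidef := aux_conj_psd hM hE
  have h1 : (M + E + D).det = M.det * (1 + T * D * T + T * E * T).det := by
    have he : M + E + D = M + (D + E) := by abel
    rw [he, aux_det_add hM (D + E)]
    congr 2
    rw [Matrix.mul_add, Matrix.add_mul]
    abel
  have h2 : (M + D).det = M.det * (1 + T * D * T).det := aux_det_add hM D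
  have h3 : (M + E).det = M.det * (1 + T * E * T).det := aux_det_add hM E
  rw [h1, h2, h3]
  have hkey := aux_det_key hD' hE'
  have h4 : (0:ℝ) ≤ M.det * M.det := mul_nonneg hM.det_pos.le hM.det_pos.le
  nlinarith [mul_le_mul_of_nonneg_left hkey h4]

lemma aux_sum_psd {N : ℕ} (Δ : Fin N → Matrix (Fin n) (Fin n) ℝ)
    (hΔ : ∀ ℓ, (Δ ℓ).PosSemidef) (s : Finset (Fin N)) :
    (∑ ℓ ∈ s, Δ ℓ).PosSemidef :=
  Finset.sum_induction Δ _ (fun _ _ ha hb => ha.add hb) Matrix.PosSemidef.zero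
    (fun i _ => hΔ i)

/-- Submodularity of the log-determinant set function: for `Ω̄ ≻ 0` and `Δ_ℓ ⪰ 0`, the
set function `f(S) = log det (Ω̄ + ∑_{ℓ∈S} Δ_ℓ)` satisfies the diminishing-returns property. -/
theorem logdet_submodular {n N : ℕ}
    (Ω : Matrix (Fin n) (Fin n) ℝ) (hΩ : Ω.PosDef)
    (Δ : Fin N → Matrix (Fin n) (Fin n) ℝ) (hΔ : ∀ ℓ, (Δ ℓ).PosSemidef)
    (A B : Finset (Fin N)) (hAB : A ⊆ B) (e : Fin N) (he : e ∉ B) :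
    Real.log (Ω + ∑ ℓ ∈ insert e B, Δ ℓ).det - Real.log (Ω + ∑ ℓ ∈ B, Δ ℓ).det ≤
      Real.log (Ω + ∑ ℓ ∈ insert e A, Δ ℓ).det - Real.log (Ω + ∑ ℓ ∈ A, Δ ℓ).det := by
  have heA : e ∉ A := fun h => he (hAB h)
  set M := Ω + ∑ ℓ ∈ A, Δ ℓ with hMdef
  set E := ∑ ℓ ∈ B \ A, Δ ℓ with hEdef
  set D := Δ e with hDdef
  have hM : M.PosDef := hΩ.add_posSemidef (aux_sum_psd Δ hΔ A)
  have hE : E.PosSemidef := aux_sum_psd Δ hΔ (B \ A)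
  have hD : D.PosSemidef := hΔ e
  have hsB : (∑ ℓ ∈ B, Δ ℓ) = E + ∑ ℓ ∈ A, Δ ℓ := (Finset.sum_sdiff hAB).symm
  have hB1 : Ω + ∑ ℓ ∈ B, Δ ℓ = M + E := by rw [hsB, hMdef]; abel
  have hB2 : Ω + ∑ ℓ ∈ insert e B, Δ ℓ = M + E + D := by
    rw [Finset.sum_insert he, hsB, hMdef, hDdef]; abel
  have hA2 : Ω + ∑ ℓ ∈ insert e A, Δ ℓ = M + D := by
    rw [Finset.sum_insert heA, hMdef, hDdef]; abel
  rw [hB1, hB2, hA2]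
  have hMED : (M + E + D).PosDef := (hM.add_posSemidef hE).add_posSemidef hD
  have hME : (M + E).PosDef := hM.add_posSemidef hE
  have hMD : (M + D).PosDef := hM.add_posSemidef hD
  have hmain := aux_main hM hD hE
  have hlog : Real.log ((M + E + D).det * M.det) ≤ Real.log ((M + D).det * (M + E).det) :=
    Real.log_le_log (mul_pos hMED.det_pos hM.det_pos) hmain
  rw [Real.log_mul hMED.det_pos.ne' hM.det_pos.ne',
    Real.log_mul hMD.det_pos.ne' hME.det_pos.ne'] at hlog
  linarith
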